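/- arXiv:2202.02020 — 5 statements merged into one kernel-verified Lean document; each statement's English description precedes it below -/
import Mathlib

section
/- Let $k$ be a perfect field of characteristic $p$ and fix $m \in \mathbb{Z}$. Let $w(Y) \in Y + Y^2\cdot k[[Y]]$ be invertible under composition and nontorsion, meaning $w^{\circ n}(Y) \neq Y$ for all $n \geq 1$. Let $f(Y) \in Y\cdot k[[Y]]$ be separable, i.e., $f'(Y) \neq 0$. If $w^{(m)} \circ f = f \circ w$, then $f'(0) \neq 0$, i.e., $f$ is invertible under composition. -/
open PowerSeries

/-- Composition (substitution) of formal power series: `(w.comp' v)(Y) = w(v(Y))`,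
intended for `v` with zero constant coefficient. -/
noncomputable def PowerSeries.comp' {k : Type*} [CommSemiring k] (w v : PowerSeries k) :
    PowerSeries k :=
  PowerSeries.mk fun n => ∑ i ∈ Finset.range (n + 1), coeff i w * coeff n (v ^ i)

/-- `w.iter n` is the `n`-fold composition iterate `w^{∘n}` of `w`, with `w^{∘0} = Y`. -/
noncomputable def PowerSeries.iter {k : Type*} [CommSemiring k] (w : PowerSeries k) :
    ℕ → PowerSeries k
  | 0 => X
  | n + 1 => w.comp' (w.iter n)


namespace CompAux

open Finset PowerSeries

variable {k : Type*} [CommRing k]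

lemma coeff_comp' (w v : PowerSeries k) (n : ℕ) :
    coeff n (w.comp' v) = ∑ i ∈ Finset.range (n + 1), coeff i w * coeff n (v ^ i) :=
  coeff_mk _ _

lemma coeff_pow_zero {h : PowerSeries k} {r : ℕ} (hh : ∀ t < r, coeff t h = 0)
    {i n : ℕ} (hn : n < i * r) : coeff n (h ^ i) = 0 := by
  have hx : (X : PowerSeries k) ^ r ∣ h := X_pow_dvd_iff.mpr hh
  have hd : (X : PowerSeries k) ^ (i * r) ∣ h ^ i := by
    rw [mul_comm, pow_mul]
    exact pow_dvd_pow_of_dvd hx i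
  exact X_pow_dvd_iff.mp hd n hn

lemma coeff_pow_zero' {v : PowerSeries k} (hv : constantCoeff v = 0)
    {i n : ℕ} (hn : n < i) : coeff n (v ^ i) = 0 := by
  refine coeff_pow_zero (r := 1) (fun t ht => ?_) (by omega)
  obtain rfl : t = 0 := by omega
  simpa using hv

lemma coeff_comp'_trunc (w c : PowerSeries k) {n N : ℕ} (hn : n < N) :
    coeff n (w.comp' c) = coeff n ((↑(trunc N w) : PowerSeries k).comp' c) := by
  rw [coeff_comp', coeff_comp']
  refine Finset.sum_congr rfl fun i hi => ?_
  rw [mem_range] at hi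
  rw [Polynomial.coeff_coe, coeff_trunc, if_pos (by omega)]

lemma coe_comp' {c : PowerSeries k} (hc : constantCoeff c = 0) (P : Polynomial k) :
    (↑P : PowerSeries k).comp' c = Polynomial.eval₂ C c P := by
  ext n
  rw [coeff_comp', Polynomial.eval₂_eq_sum, Polynomial.sum_def, map_sum]
  have h1 : ∑ i ∈ Finset.range (n + 1), coeff i (↑P : PowerSeries k) * coeff n (c ^ i)
      = ∑ i ∈ Finset.range (n + 1) ∪ P.support,
          coeff i (↑P : PowerSeries k) * coeff n (c ^ i) := by
    refine Finset.sum_subset Finset.subset_union_left fun i _ hi => ?_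
    rw [mem_range, not_lt] at hi
    rw [coeff_pow_zero' hc (by omega), mul_zero]
  have h2 : ∑ i ∈ P.support, coeff n (C (P.coeff i) * c ^ i)
      = ∑ i ∈ Finset.range (n + 1) ∪ P.support,
          coeff n (C (P.coeff i) * c ^ i) := by
    refine Finset.sum_subset Finset.subset_union_right fun i _ hi => ?_
    rw [Polynomial.notMem_support_iff.mp hi, map_zero, zero_mul, map_zero]
  rw [h1, h2]
  refine Finset.sum_congr rfl fun i _ => ?_
  rw [coeff_C_mul, Polynomial.coeff_coe]

lemma coeff_eval₂_zero {c : PowerSeries k} (hc : constantCoeff c = 0)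
    {D : Polynomial k} {n N : ℕ} (hn : n < N) (hD : ∀ d < N, D.coeff d = 0) :
    coeff n (Polynomial.eval₂ C c D) = 0 := by
  rw [Polynomial.eval₂_eq_sum, Polynomial.sum_def, map_sum]
  refine Finset.sum_eq_zero fun i hi => ?_
  have hNi : N ≤ i := by
    by_contra hlt
    exact Polynomial.mem_support_iff.mp hi (hD i (by omega))
  rw [coeff_C_mul, coeff_pow_zero' hc (by omega), mul_zero]

lemma mul_comp' (a b c : PowerSeries k) (hc : constantCoeff c = 0) :
    (a * b).comp' c = a.comp' c * b.comp' c := by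
  ext n
  set N := n + 1 with hN
  set E : Polynomial k →+* PowerSeries k := Polynomial.eval₂RingHom C c with hE
  have hEa : ∀ P : Polynomial k, E P = Polynomial.eval₂ C c P := fun _ => rfl
  have h1 : coeff n ((a * b).comp' c) = coeff n (E (trunc N (a * b))) := by
    rw [coeff_comp'_trunc (a * b) c (Nat.lt_succ_self n), coe_comp' hc, hEa]
  have hD : ∀ d < N, ((trunc N (a * b)) - trunc N a * trunc N b).coeff d = 0 := by
    intro d hd
    rw [Polynomial.coeff_sub, coeff_trunc, if_pos hd, Polynomial.coeff_mul,
      PowerSeries.coeff_mul, sub_eq_zero]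
    refine Finset.sum_congr rfl fun p hp => ?_
    have h1 := Finset.HasAntidiagonal.antidiagonal.fst_le hp
    have h2 := Finset.HasAntidiagonal.antidiagonal.snd_le hp
    rw [coeff_trunc, coeff_trunc, if_pos (by omega), if_pos (by omega)]
  have key : coeff n (E (trunc N (a * b))) = coeff n (E (trunc N a * trunc N b)) := by
    have hsub : E (trunc N (a * b)) =
        E (trunc N a * trunc N b) + E (trunc N (a * b) - trunc N a * trunc N b) := by
      rw [← map_add]; congr 1; ring
    rw [hsub, map_add]
    have hz : coeff n (E (trunc N (a * b) - trunc N a * trunc N b)) = 0 := by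
      rw [hEa]; exact coeff_eval₂_zero hc (Nat.lt_succ_self n) hD
    rw [hz, add_zero]
  rw [h1, key, map_mul, PowerSeries.coeff_mul, PowerSeries.coeff_mul]
  refine Finset.sum_congr rfl fun p hp => ?_
  have h1 := Finset.HasAntidiagonal.antidiagonal.fst_le hp
  have h2 := Finset.HasAntidiagonal.antidiagonal.snd_le hp
  rw [hEa, hEa, ← coe_comp' hc, ← coe_comp' hc,
    ← coeff_comp'_trunc a c (show p.1 < N by omega),
    ← coeff_comp'_trunc b c (show p.2 < N by omega)]

lemma one_comp' (c : PowerSeries k) : (1 : PowerSeries k).comp' c = 1 := by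
  ext n
  rw [coeff_comp']
  rw [Finset.sum_eq_single 0]
  · simp
  · intro i hi h0
    rw [coeff_one, if_neg h0, zero_mul]
  · intro h; simp at h

lemma pow_comp' (b c : PowerSeries k) (hc : constantCoeff c = 0) (j : ℕ) :
    (b ^ j).comp' c = (b.comp' c) ^ j := by
  induction j with
  | zero => simpa using one_comp' c
  | succ j ih => rw [pow_succ, pow_succ, mul_comp' _ _ _ hc, ih]

lemma add_comp' (a b c : PowerSeries k) :
    (a + b).comp' c = a.comp' c + b.comp' c := by
  ext n
  rw [map_add, coeff_comp', coeff_comp', coeff_comp', ← Finset.sum_add_distrib]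
  refine Finset.sum_congr rfl fun i _ => ?_
  rw [map_add, add_mul]

lemma X_comp' (c : PowerSeries k) (hc : constantCoeff c = 0) :
    (X : PowerSeries k).comp' c = c := by
  ext n
  rw [coeff_comp']
  rcases Nat.eq_zero_or_pos n with rfl | hn
  · simp [hc]
  · rw [Finset.sum_eq_single 1]
    · simp
    · intro i hi h1
      rw [coeff_X, if_neg h1, zero_mul]
    · intro h; rw [mem_range] at h; omega

lemma comp'_X (w : PowerSeries k) : w.comp' X = w := by
  ext n
  rw [coeff_comp']
  rw [Finset.sum_eq_single n]
  · rw [coeff_X_pow, if_pos rfl, mul_one]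
  · intro i hi hne
    rw [coeff_X_pow, if_neg (fun h => hne h.symm), mul_zero]
  · intro h; rw [mem_range] at h; omega

lemma constantCoeff_comp' (w v : PowerSeries k) :
    constantCoeff (w.comp' v) = constantCoeff w := by
  have := coeff_comp' w v 0
  rw [coeff_zero_eq_constantCoeff] at this
  rw [this]
  simp

lemma comp'_assoc (a b c : PowerSeries k) (hb : constantCoeff b = 0)
    (hc : constantCoeff c = 0) :
    (a.comp' b).comp' c = a.comp' (b.comp' c) := by
  ext n
  rw [coeff_comp', coeff_comp']
  have lhs : ∀ i ∈ Finset.range (n + 1),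
      coeff i (a.comp' b) * coeff n (c ^ i)
      = ∑ j ∈ Finset.range (n + 1), coeff j a * (coeff i (b ^ j) * coeff n (c ^ i)) := by
    intro i hi
    rw [mem_range] at hi
    rw [coeff_comp', Finset.sum_mul]
    rw [← Finset.sum_subset (Finset.range_subset_range.mpr (show i + 1 ≤ n + 1 by omega))]
    · exact Finset.sum_congr rfl fun j _ => by ring
    · intro j _ hj
      rw [mem_range, not_lt] at hj
      rw [coeff_pow_zero' hb (by omega), zero_mul, mul_zero]
  rw [Finset.sum_congr rfl lhs, Finset.sum_comm]
  refine Finset.sum_congr rfl fun j _ => ?_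
  rw [← Finset.mul_sum, ← coeff_comp', pow_comp' b c hc j]

lemma constantCoeff_iter (w : PowerSeries k) (hw : constantCoeff w = 0) (n : ℕ) :
    constantCoeff (w.iter n) = 0 := by
  cases n with
  | zero => simp [PowerSeries.iter]
  | succ n => rw [PowerSeries.iter, constantCoeff_comp']; exact hw

lemma iter_add (w : PowerSeries k) (hw : constantCoeff w = 0) (a b : ℕ) :
    w.iter (a + b) = (w.iter a).comp' (w.iter b) := by
  induction a with
  | zero => rw [Nat.zero_add, PowerSeries.iter, X_comp' _ (constantCoeff_iter w hw b)]
  | succ a ih =>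
      have : a + 1 + b = (a + b) + 1 := by omega
      rw [this, PowerSeries.iter, ih, PowerSeries.iter,
        comp'_assoc w (w.iter a) (w.iter b) (constantCoeff_iter w hw a)
          (constantCoeff_iter w hw b)]

lemma iter_mul (w : PowerSeries k) (hw : constantCoeff w = 0) (a b : ℕ) :
    (w.iter b).iter a = w.iter (a * b) := by
  induction a with
  | zero => rw [Nat.zero_mul]; rfl
  | succ a ih =>
      rw [PowerSeries.iter, ih, ← iter_add w hw b (a * b)]
      have h : b + a * b = (a + 1) * b := by ring
      rw [h]

lemma map_comp' {k' : Type*} [CommRing k'] (σ : k →+* k') (a b : PowerSeries k) :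
    PowerSeries.map σ (a.comp' b) = (PowerSeries.map σ a).comp' (PowerSeries.map σ b) := by
  ext n
  rw [coeff_map, coeff_comp', coeff_comp', map_sum]
  refine Finset.sum_congr rfl fun i _ => ?_
  rw [map_mul, coeff_map, ← map_pow, coeff_map]

lemma coeff_mul_natCast (A : PowerSeries k) (c n : ℕ) :
    coeff n (A * (c : PowerSeries k)) = coeff n A * (c : k) := by
  have hc : ((c : k⟦X⟧)) = C (c : k) := by rw [map_natCast]
  rw [hc, mul_comm, coeff_C_mul, mul_comm]

lemma coeff_self_pow (z : PowerSeries k) (M : ℕ) (hM : 1 ≤ M)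
    (hz : ∀ t < 2, coeff t (z - X) = 0) : coeff M (z ^ M) = 1 := by
  have hzz : z ^ M = (X + (z - X)) ^ M := by ring_nf
  rw [hzz, add_pow, map_sum]
  rw [Finset.sum_eq_single M]
  · rw [Nat.sub_self, pow_zero, mul_one, Nat.choose_self, Nat.cast_one, mul_one,
      coeff_X_pow, if_pos rfl]
  · intro i hi hne
    rw [Finset.mem_range] at hi
    have hl : 1 ≤ M - i := by omega
    have h2 : (M - i) * 1 ≤ (M - i) * 2 := Nat.mul_le_mul_left _ (by omega)
    rw [coeff_mul_natCast, coeff_X_pow_mul']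
    split_ifs with hle
    · rw [coeff_pow_zero hz (by omega), zero_mul]
    · exact zero_mul _
  · intro hM'; simp at hM'

lemma iter_depth (v : PowerSeries k) (M : ℕ) (hM : 2 ≤ M)
    (hv : ∀ t < M, coeff t (v - X) = 0) (j : ℕ) :
    (∀ t < M, coeff t (v.iter j - X) = 0) ∧
      coeff M (v.iter j - X) = j • coeff M (v - X) := by
  have hv0 : constantCoeff v = 0 := by
    have h0 := hv 0 (by omega)
    rw [map_sub, coeff_zero_eq_constantCoeff, constantCoeff_X, sub_zero] at h0
    exact h0
  induction j with
  | zero =>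
      constructor
      · intro t ht; simp [PowerSeries.iter]
      · simp [PowerSeries.iter]
  | succ j ih =>
      obtain ⟨ih1, ih2⟩ := ih
      have hz0 : constantCoeff (v.iter j) = 0 := constantCoeff_iter v hv0 j
      have hdec : v.iter (j + 1) - X = (v.iter j - X) + (v - X).comp' (v.iter j) := by
        have h2 := add_comp' X (v - X) (v.iter j)
        rw [X_comp' _ hz0] at h2
        rw [show (X : PowerSeries k) + (v - X) = v by ring] at h2
        have h3 : v.iter (j + 1) = v.comp' (v.iter j) := rfl
        rw [h3, h2]; ring
      have hcomp : ∀ t ≤ M, coeff t ((v - X).comp' (v.iter j))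
          = if t = M then coeff M (v - X) else 0 := by
        intro t ht
        rw [coeff_comp']
        split_ifs with htM
        · rw [htM]
          rw [Finset.sum_eq_single M]
          · rw [coeff_self_pow (v.iter j) M (by omega)
              (fun t' ht' => ih1 t' (by omega)), mul_one]
          · intro i hi hne
            rw [Finset.mem_range] at hi
            rw [hv i (by omega), zero_mul]
          · intro hm; rw [Finset.mem_range] at hm; omega
        · refine Finset.sum_eq_zero fun i hi => ?_
          rw [Finset.mem_range] at hi
          rw [hv i (by omega), zero_mul]
      constructor
      · intro t ht
        rw [hdec, map_add, ih1 t ht, hcomp t (by omega), if_neg (by omega), add_zero]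
      · rw [hdec, map_add, ih2, hcomp M le_rfl, if_pos rfl, succ_nsmul]

lemma growth {p : ℕ} (hp : p.Prime) [CharP k p] (w : PowerSeries k)
    (hw0 : constantCoeff w = 0) (hw1 : coeff 1 w = 1) (s : ℕ) :
    ∀ t < s + 2, coeff t (w.iter (p ^ s) - X) = 0 := by
  induction s with
  | zero =>
      intro t ht
      have h1 : w.iter (p ^ 0) = w := by
        rw [pow_zero]
        show w.comp' (w.iter 0) = w
        show w.comp' X = w
        exact comp'_X w
      rw [h1]
      interval_cases t
      · rw [map_sub, coeff_zero_eq_constantCoeff, constantCoeff_X, sub_zero]; exact hw0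
      · rw [map_sub, hw1, coeff_X, if_pos rfl, sub_self]
  | succ s ih =>
      intro t ht
      have hiter : w.iter (p ^ (s + 1)) = (w.iter (p ^ s)).iter p := by
        rw [iter_mul w hw0 p (p ^ s), ← pow_succ']
      rw [hiter]
      have hid := iter_depth (w.iter (p ^ s)) (s + 2) (by omega) ih p
      rcases lt_or_ge t (s + 2) with h1 | h1
      · exact hid.1 t h1
      · have ht2 : t = s + 2 := by omega
        rw [ht2, hid.2, nsmul_eq_mul, CharP.cast_eq_zero k p, zero_mul]

lemma rel_iter (σ : k →+* k) (w f : PowerSeries k)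
    (hw0 : constantCoeff w = 0) (hf0 : constantCoeff f = 0)
    (hcomm : (PowerSeries.map σ w).comp' f = f.comp' w) (n : ℕ) :
    (PowerSeries.map σ (w.iter n)).comp' f = f.comp' (w.iter n) := by
  induction n with
  | zero =>
      show (PowerSeries.map σ X).comp' f = f.comp' X
      rw [PowerSeries.map_X, X_comp' f hf0, comp'_X]
  | succ n ih =>
      have hB0 : constantCoeff (PowerSeries.map σ (w.iter n)) = 0 := by
        rw [← coeff_zero_eq_constantCoeff_apply, coeff_map,
          coeff_zero_eq_constantCoeff_apply, constantCoeff_iter w hw0 n, map_zero]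
      have hi0 : constantCoeff (w.iter n) = 0 := constantCoeff_iter w hw0 n
      show (PowerSeries.map σ (w.comp' (w.iter n))).comp' f
        = f.comp' (w.comp' (w.iter n))
      rw [map_comp' σ w (w.iter n)]
      rw [comp'_assoc _ _ _ hB0 hf0, ih, ← comp'_assoc _ _ _ hf0 hi0, hcomm,
        comp'_assoc _ _ _ hw0 hi0]

end CompAux

/-- Apply `x ↦ x^(p^m)` (the `m`-th power of the Frobenius automorphism, `m ∈ ℤ`)
to each coefficient of a power series over a perfect field of characteristic `p`. -/
noncomputable def coeffTwist (k : Type*) [Field k] (p : ℕ) [Fact p.Prime] [CharP k p]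
    [PerfectRing k p] (m : ℤ) : PowerSeries k → PowerSeries k :=
  PowerSeries.map (↑(frobeniusEquiv k p ^ m : k ≃+* k) : k →+* k)


/-- if `w ∈ Y + Y²k[[Y]]` is invertible and nontorsion, `f ∈ Y·k[[Y]]` is
separable and `w^(m) ∘ f = f ∘ w`, then `f` is invertible (i.e. `f'(0) ≠ 0`). -/
theorem separable_intertwiner_invertible {p : ℕ} [Fact p.Prime] {k : Type*} [Field k]
    [CharP k p] [PerfectRing k p] (m : ℤ) (w f : PowerSeries k)
    (hw0 : constantCoeff w = 0) (hw1 : coeff 1 w = 1)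
    (hwnt : ∀ n : ℕ, 1 ≤ n → w.iter n ≠ X)
    (hf0 : constantCoeff f = 0) (hfsep : f.derivativeFun ≠ 0)
    (hcomm : (coeffTwist k p m w).comp' f = f.comp' w) :
    constantCoeff f.derivativeFun ≠ 0 := by
  open CompAux in
  intro hcon
  classical
  have hp : p.Prime := Fact.out
  set σ : k →+* k := (↑(frobeniusEquiv k p ^ m : k ≃+* k) : k →+* k) with hσ
  have hcomm' : (PowerSeries.map σ w).comp' f = f.comp' w := hcomm
  -- coeff 1 of f is zero
  have hf1 : coeff 1 f = 0 := by
    have h0 : coeff 0 f.derivativeFun = 0 := by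
      rw [coeff_zero_eq_constantCoeff_apply]; exact hcon
    rw [show f.derivativeFun = d⁄dX k f from rfl, coeff_derivative] at h0
    simpa using h0
  have hf2 : ∀ t < 2, coeff t f = 0 := by
    intro t ht
    interval_cases t
    · rw [coeff_zero_eq_constantCoeff_apply]; exact hf0
    · exact hf1
  -- e : order of f'
  have hfe : ∃ t, coeff t f.derivativeFun ≠ 0 := by
    by_contra hno
    push_neg at hno
    exact hfsep (PowerSeries.ext fun t => by rw [hno t, map_zero])
  set e := Nat.find hfe with he_def
  have he : coeff e f.derivativeFun ≠ 0 := Nat.find_spec hfe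
  have hel : ∀ t < e, coeff t f.derivativeFun = 0 := fun t ht =>
    of_not_not (Nat.find_min hfe ht)
  -- u : the (p^e)-th iterate of w
  set u := w.iter (p ^ e) with hu_def
  have hu : ∀ t < e + 2, coeff t (u - X) = 0 := growth hp w hw0 hw1 e
  have hne : u ≠ X := hwnt (p ^ e) (Nat.one_le_pow _ _ hp.pos)
  set h := u - X with hh_def
  have hhne : h ≠ 0 := sub_ne_zero_of_ne hne
  have hre : ∃ t, coeff t h ≠ 0 := by
    by_contra hno
    push_neg at hno
    exact hhne (PowerSeries.ext fun t => by rw [hno t, map_zero])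
  set r := Nat.find hre with hr_def
  have hr : coeff r h ≠ 0 := Nat.find_spec hre
  have hrl : ∀ t < r, coeff t h = 0 := fun t ht => of_not_not (Nat.find_min hre ht)
  have hrge : e + 2 ≤ r := by
    by_contra hlt
    push_neg at hlt
    exact hr (hu r (by omega))
  set N := r + e with hN_def
  clear_value e r N
  -- the intertwining relation for u
  have hrel : (PowerSeries.map σ u).comp' f = f.comp' u :=
    rel_iter σ w f hw0 hf0 hcomm' (p ^ e)
  -- constant coefficient facts
  have hu0 : constantCoeff u = 0 := constantCoeff_iter w hw0 (p ^ e)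
  -- LEFT SIDE
  have hgl : ∀ t < r, coeff t (PowerSeries.map σ u - X) = 0 := by
    intro t ht
    have hms : PowerSeries.map σ u - X = PowerSeries.map σ (u - X) := by
      rw [map_sub, PowerSeries.map_X]
    rw [hms, coeff_map, ← hh_def, hrl t ht, map_zero]
  have hA : coeff N ((PowerSeries.map σ u).comp' f) = coeff N f := by
    have h1 : (PowerSeries.map σ u).comp' f
        = f + (PowerSeries.map σ u - X).comp' f := by
      have h2 := add_comp' X (PowerSeries.map σ u - X) f
      rw [X_comp' _ hf0] at h2
      rw [show (X : PowerSeries k) + (PowerSeries.map σ u - X)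
        = PowerSeries.map σ u by ring] at h2
      exact h2
    rw [h1, map_add, coeff_comp']
    have hz : ∑ i ∈ Finset.range (N + 1),
        coeff i (PowerSeries.map σ u - X) * coeff N (f ^ i) = 0 := by
      refine Finset.sum_eq_zero fun i _ => ?_
      rcases lt_or_ge i r with hir | hir
      · rw [hgl i hir, zero_mul]
      · rw [coeff_pow_zero hf2 (by omega), mul_zero]
    rw [hz, add_zero]
  -- RIGHT SIDE
  have hupow : ∀ j, 1 ≤ j → coeff N (u ^ j)
      = (if j = N then 1 else 0) + (j : k) * coeff (N - j + 1) h := by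
    intro j hj
    have hdecomp : u ^ j = (X + h) ^ j := by rw [hh_def]; ring_nf
    rw [hdecomp, add_pow, map_sum]
    have hsub : ({j - 1, j} : Finset ℕ) ⊆ Finset.range (j + 1) := by
      intro x hx
      simp only [Finset.mem_insert, Finset.mem_singleton] at hx
      rw [Finset.mem_range]
      omega
    have hT0 : ∀ i ∈ Finset.range (j + 1), i ∉ ({j - 1, j} : Finset ℕ) →
        coeff N (X ^ i * h ^ (j - i) * ((j.choose i : ℕ) : PowerSeries k)) = 0 := by
      intro i hi hni
      rw [Finset.mem_range] at hi
      simp only [Finset.mem_insert, Finset.mem_singleton] at hni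
      push_neg at hni
      have hl : 2 ≤ j - i := by omega
      have h2r : 2 * r ≤ (j - i) * r := Nat.mul_le_mul_right r hl
      rw [coeff_mul_natCast, coeff_X_pow_mul']
      split_ifs with hle
      · rw [coeff_pow_zero hrl (by omega), zero_mul]
      · exact zero_mul _
    rw [← Finset.sum_subset hsub hT0, Finset.sum_pair (show j - 1 ≠ j by omega)]
    have hT1 : coeff N (X ^ (j - 1) * h ^ (j - (j - 1))
        * ((j.choose (j - 1) : ℕ) : PowerSeries k)) = (j : k) * coeff (N - j + 1) h := by
      have hjj : j - (j - 1) = 1 := by omega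
      have hch : j.choose (j - 1) = j := by
        have := Nat.choose_symm (show 1 ≤ j from hj)
        rw [Nat.choose_one_right] at this
        exact this
      rw [hjj, hch, pow_one, coeff_mul_natCast, coeff_X_pow_mul']
      split_ifs with hle
      · rcases le_or_gt j N with hjN | hjN
        · rw [show N - (j - 1) = N - j + 1 by omega, mul_comm]
        · rw [show N - (j - 1) = 0 by omega, show N - j + 1 = 1 by omega,
            hrl 0 (by omega), hrl 1 (by omega)]
          ring
      · rw [show N - j + 1 = 1 by omega, hrl 1 (by omega)]
        ring
    have hTj : coeff N (X ^ j * h ^ (j - j)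
        * ((j.choose j : ℕ) : PowerSeries k)) = if j = N then 1 else 0 := by
      rw [Nat.sub_self, pow_zero, mul_one, Nat.choose_self, Nat.cast_one, mul_one,
        coeff_X_pow]
      by_cases hjN : j = N
      · rw [if_pos hjN.symm, if_pos hjN]
      · rw [if_neg (fun hh' => hjN hh'.symm), if_neg hjN]
    rw [hT1, hTj]
    ring
  have hB : coeff N (f.comp' u)
      = coeff N f + coeff e f.derivativeFun * coeff r h := by
    rw [coeff_comp', Finset.sum_range_succ']
    have hN0 : coeff 0 f * coeff N (u ^ 0) = 0 := by
      rw [pow_zero, coeff_one, if_neg (by omega), mul_zero]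
    rw [hN0, add_zero]
    have hterm : ∀ j ∈ Finset.range N, coeff (j + 1) f * coeff N (u ^ (j + 1))
        = coeff (j + 1) f * (if j + 1 = N then 1 else 0)
          + coeff j f.derivativeFun * coeff (N - j) h := by
      intro j hj
      rw [Finset.mem_range] at hj
      rw [hupow (j + 1) (by omega), mul_add]
      congr 1
      rw [show f.derivativeFun = d⁄dX k f from rfl, coeff_derivative, show N - (j + 1) + 1 = N - j by omega]
      push_cast
      ring
    rw [Finset.sum_congr rfl hterm, Finset.sum_add_distrib]
    congr 1
    · rw [Finset.sum_eq_single (N - 1)]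
      · rw [if_pos (by omega), mul_one, show N - 1 + 1 = N by omega]
      · intro j hj hne'
        rw [Finset.mem_range] at hj
        rw [if_neg (by omega), mul_zero]
      · intro hm
        rw [Finset.mem_range] at hm
        omega
    · rw [Finset.sum_eq_single e]
      · rw [show N - e = r by omega]
      · intro j hj hne'
        rw [Finset.mem_range] at hj
        rcases lt_or_ge j e with hje | hje
        · rw [hel j hje, zero_mul]
        · rw [hrl (N - j) (by omega), mul_zero]
      · intro hm
        rw [Finset.mem_range] at hm
        omega
  have hfin := congrArg (fun x => coeff N x) hrel
  change coeff N _ = coeff N _ at hfin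
  rw [hA, hB] at hfin
  exact (mul_ne_zero he hr) (left_eq_add.mp hfin)
end

section
/- Let $k$ be a field of characteristic $p$ and let $w(Y) = Y + w_r Y^r + O(Y^{r+1}) \in k[[Y]]$ with $w_r \neq 0$ and $r \geq 2$. If $w$ is nontorsion (no iterate of $w$ equals $Y$), then for any integer $N$ there exists $\ell \geq 0$ such that the order of vanishing of $w^{\circ p^\ell}(Y) - Y$ is at least $N$ (in particular, one can replace $w$ by an iterate $w^{\circ p^\ell}$ so that in $w^{\circ p^\ell}(Y) = Y + w'_{r'} Y^{r'} + O(Y^{r'+1})$ one has $r' \geq N$). -/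
open PowerSeries

namespace PowerSeries

variable {k : Type*} [CommRing k]

theorem coeff_comp'' (f g : PowerSeries k) (n : ℕ) :
    coeff n (f.comp' g) = ∑ i ∈ Finset.range (n + 1), coeff i f * coeff n (g ^ i) := by
  simp [comp']

theorem coeff_pow_eq_zero' {g : PowerSeries k} (hg : constantCoeff g = 0)
    {n i : ℕ} (h : n < i) : coeff n (g ^ i) = 0 := by
  have hd : (X : PowerSeries k) ^ i ∣ g ^ i := pow_dvd_pow_of_dvd (X_dvd_iff.2 hg) i
  exact X_pow_dvd_iff.1 hd n h

theorem coeff_pow_congr' {g g' : PowerSeries k} {n : ℕ}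
    (h : ∀ j ≤ n, coeff j g = coeff j g') (i : ℕ) :
    ∀ j ≤ n, coeff j (g ^ i) = coeff j (g' ^ i) := by
  induction i with
  | zero => simp
  | succ i ih =>
    intro j hj
    rw [pow_succ, pow_succ, coeff_mul, coeff_mul]
    apply Finset.sum_congr rfl
    rintro ⟨a, b⟩ hab
    rw [Finset.HasAntidiagonal.mem_antidiagonal] at hab
    rw [ih a (by omega), h b (by omega)]

theorem coeff_comp'_congr {f f' g g' : PowerSeries k} {n : ℕ}
    (hf : ∀ j ≤ n, coeff j f = coeff j f')
    (hg : ∀ j ≤ n, coeff j g = coeff j g') :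
    coeff n (f.comp' g) = coeff n (f'.comp' g') := by
  rw [coeff_comp'', coeff_comp'']
  apply Finset.sum_congr rfl
  intro i hi
  rw [Finset.mem_range] at hi
  rw [hf i (by omega), coeff_pow_congr' hg i n le_rfl]

theorem coe_comp'_eq {P Q : Polynomial k} (hQ : Q.coeff 0 = 0) :
    ((P.comp Q : Polynomial k) : PowerSeries k)
      = (P : PowerSeries k).comp' (Q : PowerSeries k) := by
  have hQ0 : constantCoeff (Q : PowerSeries k) = 0 := by
    rw [← coeff_zero_eq_constantCoeff_apply, Polynomial.coeff_coe, hQ]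
  ext n
  have hcomp : (P.comp Q : Polynomial k)
      = ∑ i ∈ Finset.range (P.natDegree + 1), Polynomial.C (P.coeff i) * Q ^ i := by
    rw [Polynomial.comp, Polynomial.eval₂_eq_sum_range]
  have h1 : coeff n ((P.comp Q : Polynomial k) : PowerSeries k)
      = ∑ i ∈ Finset.range (P.natDegree + 1),
          P.coeff i * coeff n ((Q : PowerSeries k) ^ i) := by
    rw [hcomp, Polynomial.coeff_coe, Polynomial.finset_sum_coeff]
    apply Finset.sum_congr rfl
    intro i _
    rw [Polynomial.coeff_C_mul, ← Polynomial.coe_pow, Polynomial.coeff_coe]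
  rw [h1, coeff_comp'']
  -- both sums equal the sum over `range (max (P.natDegree + 1) (n + 1))`
  set M := max (P.natDegree + 1) (n + 1) with hM
  have e1 : ∑ i ∈ Finset.range (P.natDegree + 1),
        P.coeff i * coeff n ((Q : PowerSeries k) ^ i)
      = ∑ i ∈ Finset.range M, P.coeff i * coeff n ((Q : PowerSeries k) ^ i) := by
    apply Finset.sum_subset (Finset.range_subset_range.2 (by omega))
    intro i _ hi
    rw [Finset.mem_range, not_lt] at hi
    rw [Polynomial.coeff_eq_zero_of_natDegree_lt (by omega), zero_mul]
  have e2 : ∑ i ∈ Finset.range (n + 1),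
        coeff i (P : PowerSeries k) * coeff n ((Q : PowerSeries k) ^ i)
      = ∑ i ∈ Finset.range M,
        coeff i (P : PowerSeries k) * coeff n ((Q : PowerSeries k) ^ i) := by
    apply Finset.sum_subset (Finset.range_subset_range.2 (by omega))
    intro i _ hi
    rw [Finset.mem_range, not_lt] at hi
    rw [coeff_pow_eq_zero' hQ0 (by omega), mul_zero]
  rw [e1, e2]
  exact Finset.sum_congr rfl fun i _ => by rw [Polynomial.coeff_coe]

theorem comp'_assoc' {f g h : PowerSeries k} (hg : constantCoeff g = 0)
    (hh : constantCoeff h = 0) :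
    (f.comp' g).comp' h = f.comp' (g.comp' h) := by
  ext n
  set Tf := trunc (n + 1) f with hTf
  set Tg := trunc (n + 1) g with hTg
  set Th := trunc (n + 1) h with hTh
  have hf' : ∀ j ≤ n, coeff j f = coeff j (Tf : PowerSeries k) := fun j hj => by
    rw [Polynomial.coeff_coe, hTf, coeff_trunc, if_pos (by omega)]
  have hg' : ∀ j ≤ n, coeff j g = coeff j (Tg : PowerSeries k) := fun j hj => by
    rw [Polynomial.coeff_coe, hTg, coeff_trunc, if_pos (by omega)]
  have hh' : ∀ j ≤ n, coeff j h = coeff j (Th : PowerSeries k) := fun j hj => by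
    rw [Polynomial.coeff_coe, hTh, coeff_trunc, if_pos (by omega)]
  have hTg0 : Tg.coeff 0 = 0 := by
    rw [hTg, coeff_trunc, if_pos (by omega), coeff_zero_eq_constantCoeff, hg]
  have hTh0 : Th.coeff 0 = 0 := by
    rw [hTh, coeff_trunc, if_pos (by omega), coeff_zero_eq_constantCoeff, hh]
  have hgh0 : (Tg.comp Th).coeff 0 = 0 := by
    rw [Polynomial.coeff_zero_eq_eval_zero, Polynomial.eval_comp,
      ← Polynomial.coeff_zero_eq_eval_zero, hTh0, ← Polynomial.coeff_zero_eq_eval_zero, hTg0]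
  have step1 : coeff n ((f.comp' g).comp' h)
      = coeff n (((Tf.comp Tg : Polynomial k) : PowerSeries k).comp' (Th : PowerSeries k)) := by
    apply coeff_comp'_congr
    · intro j hj
      rw [coe_comp'_eq hTg0]
      exact coeff_comp'_congr (fun i hi => hf' i (by omega)) (fun i hi => hg' i (by omega))
    · exact hh'
  have step2 : coeff n (f.comp' (g.comp' h))
      = coeff n (((Tf.comp (Tg.comp Th) : Polynomial k) : PowerSeries k)) := by
    rw [coe_comp'_eq hgh0]
    apply coeff_comp'_congr hf'
    intro j hj
    rw [coe_comp'_eq hTh0]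
    exact coeff_comp'_congr (fun i hi => hg' i (by omega)) (fun i hi => hh' i (by omega))
  rw [step1, ← coe_comp'_eq hTh0, step2, Polynomial.comp_assoc]

theorem comp'_X_right (f : PowerSeries k) : f.comp' X = f := by
  ext n
  rw [coeff_comp'']
  rw [Finset.sum_eq_single n]
  · rw [coeff_X_pow, if_pos rfl, mul_one]
  · intro i _ hi
    rw [coeff_X_pow, if_neg (by omega), mul_zero]
  · intro hn
    exact absurd (Finset.self_mem_range_succ n) hn

theorem X_comp'_left {g : PowerSeries k} (hg : constantCoeff g = 0) :
    (X : PowerSeries k).comp' g = g := by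
  ext n
  rw [coeff_comp'']
  rw [Finset.sum_eq_single 1]
  · rw [coeff_X, if_pos rfl, pow_one, one_mul]
  · intro i _ hi
    rw [coeff_X, if_neg hi, zero_mul]
  · intro h1
    rw [Finset.mem_range, not_lt] at h1
    have hn0 : n = 0 := by omega
    subst hn0
    rw [pow_one, coeff_zero_eq_constantCoeff, hg, mul_zero]

theorem constantCoeff_comp'' (f g : PowerSeries k) :
    constantCoeff (f.comp' g) = constantCoeff f := by
  rw [← coeff_zero_eq_constantCoeff_apply, coeff_comp'']
  simp

theorem constantCoeff_iter {w : PowerSeries k} (hw : constantCoeff w = 0) (n : ℕ) :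
    constantCoeff (w.iter n) = 0 := by
  induction n with
  | zero => simp [iter]
  | succ n ih => rw [iter, constantCoeff_comp'', hw]

theorem iter_add' {w : PowerSeries k} (hw : constantCoeff w = 0) (a b : ℕ) :
    w.iter (a + b) = (w.iter a).comp' (w.iter b) := by
  induction a with
  | zero =>
    rw [zero_add]
    exact (X_comp'_left (constantCoeff_iter hw b)).symm
  | succ a ih =>
    rw [show a + 1 + b = (a + b) + 1 by omega, iter, ih,
      ← comp'_assoc' (constantCoeff_iter hw a) (constantCoeff_iter hw b)]
    rfl

theorem iter_mul' {w : PowerSeries k} (hw : constantCoeff w = 0) (a b : ℕ) :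
    w.iter (a * b) = (w.iter a).iter b := by
  induction b with
  | zero => rw [mul_zero]; rfl
  | succ b ih =>
    rw [show a * (b + 1) = a + a * b by ring, iter_add' hw, ih]
    rfl

/-- `u` has the shape `Y + O(Y^s)` with linear coefficient `1`. -/
def GoodAt (s : ℕ) (u : PowerSeries k) : Prop :=
  constantCoeff u = 0 ∧ coeff 1 u = 1 ∧ ∀ j, 2 ≤ j → j < s → coeff j u = 0

theorem coeff_pow_self' {g : PowerSeries k} (hg0 : constantCoeff g = 0)
    (hg1 : coeff 1 g = 1) (s : ℕ) : coeff s (g ^ s) = 1 := by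
  obtain ⟨q, hq⟩ := X_dvd_iff.2 hg0
  have hq0 : constantCoeff q = 1 := by
    have h := coeff_succ_X_mul 0 q
    rw [← hq, hg1] at h
    rw [← coeff_zero_eq_constantCoeff_apply, ← h]
  rw [hq, mul_pow, show coeff s ((X : PowerSeries k) ^ s * q ^ s)
    = coeff (0 + s) ((X : PowerSeries k) ^ s * q ^ s) by rw [zero_add],
    coeff_X_pow_mul, coeff_zero_eq_constantCoeff, map_pow, hq0, one_pow]

theorem comp'_good {s : ℕ} (hs : 2 ≤ s) {f g : PowerSeries k}
    (hf : GoodAt s f) (hg : GoodAt s g) :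
    GoodAt s (f.comp' g) ∧ coeff s (f.comp' g) = coeff s f + coeff s g := by
  obtain ⟨hf0, hf1, hfl⟩ := hf
  obtain ⟨hg0, hg1, hgl⟩ := hg
  have hf0' : coeff 0 f = 0 := by rw [coeff_zero_eq_constantCoeff, hf0]
  refine ⟨⟨?_, ?_, ?_⟩, ?_⟩
  · rw [constantCoeff_comp'', hf0]
  · rw [coeff_comp'']
    rw [Finset.sum_range_succ, Finset.sum_range_one]
    simp [hf0', hf1, hg1, pow_one]
  · intro j h2 hjs
    rw [coeff_comp'']
    apply Finset.sum_eq_zero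
    intro i hi
    rw [Finset.mem_range] at hi
    rcases Nat.lt_or_ge i 2 with hi2 | hi2
    · interval_cases i
      · rw [hf0', zero_mul]
      · rw [pow_one, hgl j h2 hjs, mul_zero]
    · rw [hfl i hi2 (by omega), zero_mul]
  · rw [coeff_comp'']
    have hsub : ({1, s} : Finset ℕ) ⊆ Finset.range (s + 1) := by
      intro x hx
      simp only [Finset.mem_insert, Finset.mem_singleton] at hx
      rw [Finset.mem_range]
      omega
    rw [← Finset.sum_subset hsub ?zero]
    case zero =>
      intro i hi hni
      rw [Finset.mem_range] at hi
      simp only [Finset.mem_insert, Finset.mem_singleton, not_or] at hni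
      rcases Nat.lt_or_ge i 2 with hi2 | hi2
      · interval_cases i
        · rw [hf0', zero_mul]
        · exact absurd rfl hni.1
      · rw [hfl i hi2 (by omega), zero_mul]
    rw [Finset.sum_insert (by simp; omega), Finset.sum_singleton, pow_one, hf1, one_mul,
      coeff_pow_self' hg0 hg1 s, mul_one, add_comm]

theorem iter_good {s : ℕ} (hs : 2 ≤ s) {u : PowerSeries k} (hu : GoodAt s u) (n : ℕ) :
    GoodAt s (u.iter n) ∧ coeff s (u.iter n) = (n : k) * coeff s u := by
  induction n with
  | zero =>
    refine ⟨⟨by simp [iter], by simp [iter, coeff_X], ?_⟩, ?_⟩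
    · intro j h2 hjs
      simp only [iter, coeff_X, if_neg (by omega : ¬ j = 1)]
    · simp [iter, coeff_X, if_neg (by omega : ¬ s = 1)]
  | succ n ih =>
    obtain ⟨ihg, ihc⟩ := ih
    obtain ⟨hgood, hcoeff⟩ := comp'_good hs hu ihg
    refine ⟨hgood, ?_⟩
    rw [show u.iter (n + 1) = u.comp' (u.iter n) from rfl] at *
    rw [hcoeff, ihc]
    push_cast
    ring

end PowerSeries

/-- a nontorsion `w = Y + w_r Y^r + O(Y^{r+1})` (with `w_r ≠ 0`, `r ≥ 2`)
has iterates `w^{∘p^ℓ}` with `ord(w^{∘p^ℓ} - Y)` arbitrarily large. -/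
theorem iterate_order_large {p : ℕ} [Fact p.Prime] {k : Type*} [Field k] [CharP k p]
    (w : PowerSeries k) (r : ℕ) (hr : 2 ≤ r)
    (hw0 : constantCoeff w = 0) (hw1 : coeff 1 w = 1)
    (hwlow : ∀ j, 2 ≤ j → j < r → coeff j w = 0) (hwr : coeff r w ≠ 0)
    (hwnt : ∀ n : ℕ, 1 ≤ n → w.iter n ≠ X) :
    ∀ N : ℕ, ∃ ℓ : ℕ, (N : ℕ∞) ≤ (w.iter (p ^ ℓ) - X).order := by
  have key : ∀ ℓ : ℕ, GoodAt (r + ℓ) (w.iter (p ^ ℓ)) := by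
    intro ℓ
    induction ℓ with
    | zero =>
      have h1 : w.iter (p ^ 0) = w := by
        rw [pow_zero]
        show w.comp' (w.iter 0) = w
        rw [show w.iter 0 = X from rfl, comp'_X_right]
      rw [h1]
      exact ⟨hw0, hw1, fun j h2 hj => hwlow j h2 (by omega)⟩
    | succ ℓ ih =>
      have hs : 2 ≤ r + ℓ := by omega
      obtain ⟨good, hc⟩ := iter_good hs ih p
      have hiter : (w.iter (p ^ ℓ)).iter p = w.iter (p ^ (ℓ + 1)) := by
        rw [← iter_mul' hw0, ← pow_succ]
      rw [hiter] at good hc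
      have hc0 : coeff (r + ℓ) (w.iter (p ^ (ℓ + 1))) = 0 := by
        rw [hc, CharP.cast_eq_zero, zero_mul]
      obtain ⟨g0, g1, gl⟩ := good
      refine ⟨g0, g1, fun j h2 hj => ?_⟩
      rcases Nat.lt_or_ge j (r + ℓ) with h | h
      · exact gl j h2 h
      · have : j = r + ℓ := by omega
        rw [this, hc0]
  intro N
  refine ⟨N, ?_⟩
  obtain ⟨g0, g1, gl⟩ := key N
  have horder : ((r + N : ℕ) : ℕ∞) ≤ (w.iter (p ^ N) - X).order := by
    apply PowerSeries.nat_le_order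
    intro i hi
    rw [map_sub, PowerSeries.coeff_X]
    rcases Nat.lt_or_ge i 2 with hi2 | hi2
    · interval_cases i
      · rw [if_neg (by omega), PowerSeries.coeff_zero_eq_constantCoeff, g0, sub_zero]
      · rw [if_pos rfl, g1, sub_self]
    · rw [if_neg (by omega), gl i hi2 hi, sub_zero]
  exact le_trans (by exact_mod_cast Nat.cast_le.2 (by omega : N ≤ r + N)) horder
end

section
/- Let $F$ be a finite extension of $\mathbb{Q}_p$ with uniformizer $\pi$, residue cardinality $q$, and let $\exp_{\mathrm{LT}}(T) = \sum_{n\geq 1} e_n T^n$ be the exponential series of a Lubin-Tate formal group for $\pi$ (the composition inverse of the logarithm $\log_{\mathrm{LT}}$). Write $\exp_{\mathrm{LT}}(T)^j = \sum_{n \geq j} e_{j,n} T^n$ for $j \geq 1$. Then $\operatorname{val}_\pi(e_{j,n}) \geq -n/(q-1)$ for all $j, n \geq 1$. -/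
open PowerSeries

/-- valuation bound `val_π(e_{j,n}) ≥ -n/(q-1)` for the coefficients of the
powers `exp_LT^j` of the Lubin-Tate exponential.  The `p`-adic field `F` is modelled by a
field with an additive valuation `v : F → WithTop ℝ`; `S = [π](T)` is a Lubin-Tate series
for `π` (`S ≡ πT mod T²`, `S ≡ T^q mod π`, integral coefficients), `log` is the
coefficientwise limit of `[π^m](T)/π^m`, and `exp` is the composition inverse of `log`. -/
theorem valexp {F : Type*} [Field F] (v : F → WithTop ℝ)
    (hv0 : ∀ x, v x = ⊤ ↔ x = 0)
    (hvmul : ∀ x y, v (x * y) = v x + v y)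
    (hvadd : ∀ x y, min (v x) (v y) ≤ v (x + y))
    (q : ℕ) (hq : 2 ≤ q) (π : F) (hπ : v π = (1 : ℝ))
    (S : PowerSeries F) (hS0 : constantCoeff S = 0) (hS1 : coeff 1 S = π)
    (hSint : ∀ i, 0 ≤ v (coeff i S))
    (hSmod : ∀ i, i ≠ q → ((1 : ℝ) : WithTop ℝ) ≤ v (coeff i S))
    (hSq : ((1 : ℝ) : WithTop ℝ) ≤ v (coeff q S - 1))
    (log exp : PowerSeries F)
    (hlog : ∀ n : ℕ, ∀ M : ℝ, ∃ N : ℕ, ∀ m ≥ N,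
      (M : WithTop ℝ) ≤ v (coeff n log - coeff n (S.iter m) * (π ^ m)⁻¹))
    (hexp0 : constantCoeff exp = 0)
    (hinv1 : log.comp' exp = X) (hinv2 : exp.comp' log = X) :
    ∀ j n : ℕ, 1 ≤ j → 1 ≤ n →
      ((-(n : ℝ) / ((q : ℝ) - 1) : ℝ) : WithTop ℝ) ≤ v (coeff n (exp ^ j)) := by
  -- basic real facts
  have hq1 : (0:ℝ) < (q:ℝ) - 1 := by
    have : (2:ℝ) ≤ (q:ℝ) := by exact_mod_cast hq
    linarith
  have hq1' : ((q:ℝ) - 1) ≠ 0 := ne_of_gt hq1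
  -- basic valuation facts
  have hvz : v 0 = ⊤ := (hv0 0).2 rfl
  have hv1 : v 1 = 0 := by
    have hne : v 1 ≠ ⊤ := fun h => one_ne_zero ((hv0 1).1 h)
    obtain ⟨r, hr⟩ := WithTop.ne_top_iff_exists.mp hne
    have h := hvmul 1 1
    rw [one_mul, ← hr] at h
    have hrr : r = r + r := by exact_mod_cast h
    have : r = 0 := by linarith
    rw [← hr, this]
    norm_cast
  have hvneg : ∀ x, v (-x) = v x := by
    have hm : v (-1 : F) = 0 := by
      have hne : v (-1 : F) ≠ ⊤ := fun h => (neg_ne_zero.mpr one_ne_zero) ((hv0 _).1 h)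
      obtain ⟨r, hr⟩ := WithTop.ne_top_iff_exists.mp hne
      have h := hvmul (-1 : F) (-1)
      rw [neg_mul_neg, one_mul, hv1, ← hr] at h
      have hrr : (0:ℝ) = r + r := by exact_mod_cast h
      have : r = 0 := by linarith
      rw [← hr, this]; norm_cast
    intro x
    rw [show -x = (-1) * x by ring, hvmul, hm, zero_add]
  have hvsum : ∀ {ι : Type} (s : Finset ι) (f : ι → F) (M : WithTop ℝ),
      (∀ i ∈ s, M ≤ v (f i)) → M ≤ v (∑ i ∈ s, f i) := by
    intro ι s f M
    induction s using Finset.cons_induction with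
    | empty => intro _; simp [hvz]
    | cons a s ha ih =>
      intro h
      rw [Finset.sum_cons]
      exact le_trans (le_min (h a (Finset.mem_cons_self a s))
        (ih fun i hi => h i (Finset.mem_cons_of_mem hi))) (hvadd _ _)
  have hπne : π ≠ 0 := by
    intro h
    rw [h, hvz] at hπ
    exact (WithTop.coe_ne_top (a := (1:ℝ))) hπ.symm
  have hvpow : ∀ m : ℕ, v (π ^ m) = ((m : ℝ) : WithTop ℝ) := by
    intro m
    induction m with
    | zero => rw [pow_zero, hv1]; norm_cast
    | succ m ih =>
      rw [pow_succ, hvmul, ih, hπ, ← WithTop.coe_add]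
      norm_cast
  have hvinv : ∀ m : ℕ, v ((π ^ m)⁻¹) = ((-(m:ℝ) : ℝ) : WithTop ℝ) := by
    intro m
    have hne : v ((π ^ m)⁻¹) ≠ ⊤ :=
      fun h => (inv_ne_zero (pow_ne_zero _ hπne)) ((hv0 _).1 h)
    obtain ⟨r, hr⟩ := WithTop.ne_top_iff_exists.mp hne
    have h := hvmul (π ^ m) (π ^ m)⁻¹
    rw [mul_inv_cancel₀ (pow_ne_zero _ hπne), hv1, hvpow, ← hr, ← WithTop.coe_add] at h
    have hrr : (0:ℝ) = (m:ℝ) + r := by exact_mod_cast h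
    have hre : r = -(m:ℝ) := by linarith
    rw [← hr, hre]
  -- coefficients of comp'
  have hcomp : ∀ (w u : PowerSeries F) (n : ℕ), coeff n (w.comp' u) =
      ∑ i ∈ Finset.range (n + 1), coeff i w * coeff n (u ^ i) := by
    intro w u n
    rw [PowerSeries.comp', coeff_mk]
  -- bound for powers of a series with controlled coefficients
  have powb : ∀ (f : PowerSeries F) (m : ℕ), constantCoeff f = 0 →
      (∀ t : ℕ, 1 ≤ t → (((m : ℝ) - ((t:ℝ)-1)/((q:ℝ)-1) : ℝ) : WithTop ℝ) ≤ v (coeff t f)) →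
      ∀ (i n : ℕ), (((i:ℝ)*(m:ℝ) - ((n:ℝ)-(i:ℝ))/((q:ℝ)-1) : ℝ) : WithTop ℝ) ≤
        v (coeff n (f ^ i)) := by
    intro f m h0 hb i
    induction i with
    | zero =>
      intro n
      rcases Nat.eq_zero_or_pos n with hn | hn
      · subst hn
        rw [pow_zero, coeff_one, if_pos rfl, hv1]
        norm_num
      · rw [pow_zero, coeff_one, if_neg (by omega), hvz]
        exact le_top
    | succ i ih =>
      intro n
      rw [pow_succ', coeff_mul]
      apply hvsum
      intro p hp
      have hab : p.1 + p.2 = n := Finset.HasAntidiagonal.mem_antidiagonal.mp hp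
      rcases Nat.eq_zero_or_pos p.1 with h1 | h1
      · rw [h1, coeff_zero_eq_constantCoeff, h0, zero_mul, hvz]
        exact le_top
      · rw [hvmul]
        refine le_trans ?_ (add_le_add (hb p.1 h1) (ih p.2))
        rw [← WithTop.coe_add, WithTop.coe_le_coe]
        have hn : (p.1:ℝ) + (p.2:ℝ) = (n:ℝ) := by exact_mod_cast hab
        apply le_of_eq
        push_cast
        rw [← hn]
        field_simp
        ring
  -- constant coefficient of iterates
  have iter0 : ∀ m, constantCoeff (S.iter m) = 0 := by
    intro m
    cases m with
    | zero => simp [PowerSeries.iter]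
    | succ m =>
      rw [← coeff_zero_eq_constantCoeff]
      rw [show S.iter (m+1) = S.comp' (S.iter m) from rfl, hcomp]
      rw [Finset.sum_range_one, coeff_zero_eq_constantCoeff, hS0, zero_mul]
  -- valuation bound for coefficients of iterates
  have iterb : ∀ (m n : ℕ), 1 ≤ n →
      (((m:ℝ) - ((n:ℝ)-1)/((q:ℝ)-1) : ℝ) : WithTop ℝ) ≤ v (coeff n (S.iter m)) := by
    intro m
    induction m with
    | zero =>
      intro n hn
      show _ ≤ v (coeff n X)
      rw [coeff_X]
      by_cases h : n = 1
      · rw [if_pos h, hv1, h]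
        norm_num
      · rw [if_neg h, hvz]; exact le_top
    | succ m ih =>
      intro n hn
      rw [show S.iter (m+1) = S.comp' (S.iter m) from rfl, hcomp]
      apply hvsum
      intro i hi
      rcases Nat.eq_zero_or_pos i with h0 | h0
      · rw [h0, pow_zero, coeff_one, if_neg (by omega), mul_zero, hvz]
        exact le_top
      · rw [hvmul]
        have hpow := powb (S.iter m) m (iter0 m) (fun t ht => ih t ht) i n
        by_cases hiq : i = q
        · refine le_trans ?_ (add_le_add (hSint i) hpow)
          rw [zero_add, WithTop.coe_le_coe, hiq]
          have hm : (0:ℝ) ≤ m := by positivity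
          have hkey : ((n:ℝ)-(q:ℝ))/((q:ℝ)-1) = ((n:ℝ)-1)/((q:ℝ)-1) - 1 := by
            field_simp
            ring
          have hq2 : (2:ℝ) ≤ (q:ℝ) := by exact_mod_cast hq
          rw [hkey]
          push_cast
          nlinarith [mul_nonneg (sub_nonneg.mpr hq2) hm]
        · refine le_trans ?_ (add_le_add (hSmod i hiq) hpow)
          rw [← WithTop.coe_add, WithTop.coe_le_coe]
          have hi1 : (1:ℝ) ≤ (i:ℝ) := by exact_mod_cast h0
          have hm : (0:ℝ) ≤ m := by positivity
          have hdd : ((n:ℝ)-(i:ℝ))/((q:ℝ)-1) ≤ ((n:ℝ)-1)/((q:ℝ)-1) :=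
            div_le_div_of_nonneg_right (by linarith) hq1.le
          push_cast
          nlinarith [mul_nonneg (sub_nonneg.mpr hi1) hm]
  -- valuation bound for log coefficients
  have logb : ∀ n : ℕ, 1 ≤ n →
      ((-(((n:ℝ)-1)/((q:ℝ)-1)) : ℝ) : WithTop ℝ) ≤ v (coeff n log) := by
    intro n hn
    set M : ℝ := -(((n:ℝ)-1)/((q:ℝ)-1)) with hM
    obtain ⟨N, hN⟩ := hlog n M
    have h1 := hN N le_rfl
    have h2 : (M : WithTop ℝ) ≤ v (coeff n (S.iter N) * (π ^ N)⁻¹) := by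
      rw [hvmul, hvinv]
      refine le_trans ?_ (add_le_add (iterb N n hn) le_rfl)
      rw [← WithTop.coe_add, WithTop.coe_le_coe, hM]
      linarith
    have h3 := le_trans (le_min h1 h2) (hvadd _ _)
    rwa [sub_add_cancel] at h3
  -- the coefficient ℓ₁ equals 1
  have hco1 : ∀ m, coeff 1 (S.iter m) = π ^ m := by
    intro m
    induction m with
    | zero => simp [PowerSeries.iter]
    | succ m ih =>
      rw [show S.iter (m+1) = S.comp' (S.iter m) from rfl, hcomp]
      rw [Finset.sum_range_succ, Finset.sum_range_one]
      rw [pow_zero, pow_one, coeff_one, if_neg one_ne_zero, mul_zero, zero_add,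
        hS1, ih, pow_succ]
      ring
  have hl1 : coeff 1 log = 1 := by
    have key : ∀ M : ℝ, (M : WithTop ℝ) ≤ v (coeff 1 log - 1) := by
      intro M
      obtain ⟨N, hN⟩ := hlog 1 M
      have h := hN N le_rfl
      rwa [hco1, mul_inv_cancel₀ (pow_ne_zero _ hπne)] at h
    have ht : v (coeff 1 log - 1) = ⊤ := by
      by_contra h
      obtain ⟨r, hr⟩ := WithTop.ne_top_iff_exists.mp h
      have := key (r + 1)
      rw [← hr, WithTop.coe_le_coe] at this
      linarith
    exact sub_eq_zero.mp ((hv0 _).1 ht)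
  -- the main bound, by strong induction on n
  have main : ∀ n : ℕ, ∀ j : ℕ, 1 ≤ j →
      ((((j:ℝ) - (n:ℝ))/((q:ℝ)-1) : ℝ) : WithTop ℝ) ≤ v (coeff n (exp ^ j)) := by
    intro n
    induction n using Nat.strong_induction_on with
    | _ n IH =>
      rcases Nat.eq_zero_or_pos n with hn0 | hn0
      · subst hn0
        intro j hj
        rw [coeff_zero_eq_constantCoeff, map_pow, hexp0, zero_pow (by omega : j ≠ 0), hvz]
        exact le_top
      -- case j ≥ 2 (in fact any j ≥ 2 works using only IH on smaller n)
      have case2 : ∀ j : ℕ, 2 ≤ j →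
          ((((j:ℝ) - (n:ℝ))/((q:ℝ)-1) : ℝ) : WithTop ℝ) ≤ v (coeff n (exp ^ j)) := by
        intro j hj
        obtain ⟨i, rfl⟩ : ∃ i, j = i + 1 := ⟨j - 1, by omega⟩
        rw [pow_succ', coeff_mul]
        apply hvsum
        intro p hp
        have hab : p.1 + p.2 = n := Finset.HasAntidiagonal.mem_antidiagonal.mp hp
        rcases Nat.eq_zero_or_pos p.1 with h1 | h1
        · rw [h1, coeff_zero_eq_constantCoeff, hexp0, zero_mul, hvz]
          exact le_top
        rcases Nat.eq_zero_or_pos p.2 with h2 | h2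
        · rw [h2, coeff_zero_eq_constantCoeff, map_pow, hexp0,
            zero_pow (by omega : i ≠ 0), mul_zero, hvz]
          exact le_top
        have t1 := IH p.1 (by omega) 1 le_rfl
        have t2 := IH p.2 (by omega) i (by omega)
        rw [pow_one] at t1
        rw [hvmul]
        refine le_trans ?_ (add_le_add t1 t2)
        rw [← WithTop.coe_add, WithTop.coe_le_coe]
        have hab' : (p.1:ℝ) + (p.2:ℝ) = (n:ℝ) := by exact_mod_cast hab
        apply le_of_eq
        push_cast
        rw [← hab']
        field_simp
        ring
      intro j hj
      rcases Nat.lt_or_ge j 2 with hj2 | hj2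
      · -- j = 1
        have hj1 : j = 1 := by omega
        subst hj1
        rcases Nat.lt_or_ge n 2 with hn2 | hn2
        · -- n = 1 : coefficient is 1
          have hn1 : n = 1 := by omega
          subst hn1
          have he1 : coeff 1 exp = 1 := by
            have h := congrArg (coeff 1) hinv1
            rw [hcomp, coeff_X, if_pos rfl, Finset.sum_range_succ,
              Finset.sum_range_one, pow_zero, pow_one, coeff_one,
              if_neg one_ne_zero, mul_zero, zero_add, hl1, one_mul] at h
            exact h
          rw [pow_one, he1, hv1]
          norm_num
        · -- n ≥ 2 : use the inversion relation
          have heq : (0:F) = ∑ i ∈ Finset.range (n + 1), coeff i log * coeff n (exp ^ i) := by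
            have h := congrArg (coeff n) hinv1
            rw [hcomp, coeff_X, if_neg (by omega)] at h
            exact h.symm
          have h1mem : (1:ℕ) ∈ Finset.range (n + 1) := by
            rw [Finset.mem_range]; omega
          rw [← Finset.add_sum_erase _ _ h1mem, hl1, one_mul] at heq
          have hrec : coeff n (exp ^ 1) =
              -∑ i ∈ (Finset.range (n + 1)).erase 1, coeff i log * coeff n (exp ^ i) :=
            eq_neg_of_add_eq_zero_left heq.symm
          rw [hrec, hvneg]
          apply hvsum
          intro i hi
          obtain ⟨hi1, hir⟩ := Finset.mem_erase.mp hi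
          rcases Nat.eq_zero_or_pos i with h0 | h0
          · rw [h0, pow_zero, coeff_one, if_neg (by omega), mul_zero, hvz]
            exact le_top
          · have hi2 : 2 ≤ i := by omega
            rw [hvmul]
            refine le_trans ?_ (add_le_add (logb i h0) (case2 i hi2))
            rw [← WithTop.coe_add, WithTop.coe_le_coe]
            apply le_of_eq
            push_cast
            field_simp
            ring
      · exact case2 j hj2
  -- conclude
  intro j n hj hn
  refine le_trans ?_ (main n j hj)
  rw [WithTop.coe_le_coe]
  have hj1 : (1:ℝ) ≤ (j:ℝ) := by exact_mod_cast hj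
  apply div_le_div_of_nonneg_right (by linarith) hq1.le
end

section
/- Suppose there exists an additive, Frobenius-section, $\gamma$-equivariant map $R : \mathbf{E} \to \mathbf{E}$ on $\mathbf{E} = k((Y))$ (i.e., $R(\phi_q(f)) = f$ and $R\gamma = \gamma R$), where $\gamma$ is an automorphism with $\mathbf{E}^{\gamma=1} = k$ and $\gamma \phi_q = \phi_q \gamma$. Then for any $f \in \mathbf{E}$ with $(1-\gamma)f \in \phi_q(\mathbf{E})$, we have $f \in k + \phi_q(\mathbf{E})$. -/
/-- given an additive `γ`-equivariant section `R` of `φ_q : f ↦ f^q` on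
`𝐄 = k((Y))`, with `𝐄^{γ=1} = k`, any `f` with `(1-γ)f ∈ φ_q(𝐄)` lies in
`k + φ_q(𝐄)`. -/
theorem section_descent {k : Type*} [Field k] [Fintype k] (q : ℕ) (hq : Fintype.card k = q)
    (γ : LaurentSeries k ≃ₐ[k] LaurentSeries k)
    (R : LaurentSeries k →+ LaurentSeries k)
    (hR1 : ∀ f, R (f ^ q) = f) (hR2 : ∀ f, R (γ f) = γ (R f))
    (hfix : ∀ f : LaurentSeries k, γ f = f → ∃ c : k, f = HahnSeries.C c)
    (f : LaurentSeries k) (hf : ∃ g, f - γ f = g ^ q) :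
    ∃ (c : k) (g : LaurentSeries k), f = HahnSeries.C c + g ^ q := by
  obtain ⟨g, hg⟩ := hf
  obtain ⟨p, hpk⟩ := CharP.exists k
  haveI := hpk
  haveI : Fact p.Prime := ⟨CharP.char_is_prime k p⟩
  have hp : p.Prime := CharP.char_is_prime k p
  have hE : CharP (LaurentSeries k) p :=
    charP_of_injective_algebraMap (algebraMap k (LaurentSeries k)).injective p
  obtain ⟨n, hn⟩ : ∃ n : ℕ, q = p ^ n := by
    obtain ⟨n, -, hn⟩ := FiniteField.card k p
    exact ⟨n, by rw [← hq, hn]⟩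
  have hγf : γ f = f - g ^ q := by rw [← hg]; ring
  have hRf : γ (R f) = R f - g := by
    rw [← hR2, hγf, map_sub, hR1]
  have key : γ (f - (R f) ^ q) = f - (R f) ^ q := by
    rw [map_sub, map_pow, hRf, hγf, hn, sub_pow_char_pow]
    ring
  obtain ⟨c, hc⟩ := hfix _ key
  exact ⟨c, R f, by rw [← hc]; ring⟩
end

section
/- Let $k$ be a field of characteristic $p$, let $f \in Y\cdot k[[Y]]$ be nonzero with order of vanishing $n$, and let $w \in Y + Y^2 k[[Y]]$. Then $f$ separable (i.e. $f' \neq 0$) and $f$ satisfying an intertwining relation $v \circ f = f \circ w$ with $v \in Y + Y^2 k[[Y]]$, $v, w$ both having their first non-identity coefficient in degree $r$ with $r > \mathrm{ord}(f')$, forces $n = 1$. Precisely: if $\mathrm{ord}(f) = n$, $\mathrm{ord}(f') = k_0$, $v(Y) = Y + v_r Y^r + O(Y^{r+1})$, $w(Y) = Y + w_r Y^r + O(Y^{r+1})$ with $v_r, w_r \neq 0$ and $r > k_0$, and $v \circ f = f \circ w$, then $n = 1$. -/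
open PowerSeries

lemma aux_pow_coeff_zero {k : Type*} [CommSemiring k] (g : PowerSeries k) (r : ℕ)
    (h : ∀ j < r, coeff j g = 0) : ∀ i j, j < i * r → coeff j (g ^ i) = 0 := by
  intro i
  induction i with
  | zero => intro j hj; omega
  | succ i ih =>
    intro j hj
    rw [pow_succ, PowerSeries.coeff_mul]
    apply Finset.sum_eq_zero
    rintro ⟨a, b⟩ hab
    rw [Finset.HasAntidiagonal.mem_antidiagonal] at hab
    by_cases ha : a < i * r
    · rw [ih a ha, zero_mul]
    · have hb : b < r := by
        have : (i + 1) * r = i * r + r := by ring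
        omega
      rw [h b hb, mul_zero]

/-- if `ord f = n`, `ord f' = k0`, and `v ∘ f = f ∘ w` with
`v, w ∈ Y + Y^r·(unit)·k[[Y]] + O(Y^{r+1})`, `r > k0`, then `n = 1`. -/
theorem intertwining_forces_n_eq_one {p : ℕ} [Fact p.Prime] {k : Type*} [Field k]
    [CharP k p] (f v w : PowerSeries k) (n k0 r : ℕ)
    (hn : 1 ≤ n) (hflow : ∀ j < n, coeff j f = 0) (hfn : coeff n f ≠ 0)
    (hglow : ∀ j < k0, coeff j f.derivativeFun = 0)
    (hgk : coeff k0 f.derivativeFun ≠ 0)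
    (hv0 : constantCoeff v = 0) (hv1 : coeff 1 v = 1)
    (hvlow : ∀ j, 2 ≤ j → j < r → coeff j v = 0) (hvr : coeff r v ≠ 0)
    (hw0 : constantCoeff w = 0) (hw1 : coeff 1 w = 1)
    (hwlow : ∀ j, 2 ≤ j → j < r → coeff j w = 0) (hwr : coeff r w ≠ 0)
    (hrk : k0 < r)
    (hcomm : v.comp' f = f.comp' w) :
    n = 1 := by
  by_contra hne
  have hn2 : 2 ≤ n := by omega
  -- f_{k0+1} ≠ 0, hence n ≤ k0 + 1
  have hfk1 : coeff (k0 + 1) f ≠ 0 := by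
    intro h
    apply hgk
    rw [show f.derivativeFun = derivative k f from rfl, coeff_derivative, h, zero_mul]
  have hnk : n ≤ k0 + 1 := by
    by_contra h
    exact hfk1 (hflow _ (by omega))
  have hk1 : 1 ≤ k0 := by omega
  have hr2 : 2 ≤ r := by omega
  set N := r + k0 with hN
  set δ := w - X with hδ
  have hδc : ∀ j < r, coeff j δ = 0 := by
    intro j hj
    rw [hδ, map_sub, coeff_X]
    rcases Nat.lt_or_ge j 2 with hj2 | hj2
    · interval_cases j
      · rw [coeff_zero_eq_constantCoeff_apply, hw0]; simp
      · rw [hw1]; simp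
    · rw [hwlow j hj2 hj, if_neg (by omega)]; ring
  have hpowδ := aux_pow_coeff_zero δ r hδc
  have hpowf := aux_pow_coeff_zero f n hflow
  -- Step A
  have hA : coeff N (v.comp' f) = coeff N f := by
    rw [PowerSeries.comp', coeff_mk]
    rw [Finset.sum_eq_single 1]
    · rw [hv1, pow_one, one_mul]
    · intro i _ hne1
      rcases Nat.lt_or_ge i 2 with hi2 | hi2
      · interval_cases i
        · rw [coeff_zero_eq_constantCoeff_apply, hv0, zero_mul]
        · omega
      · rcases Nat.lt_or_ge i r with hir | hir
        · rw [hvlow i hi2 hir, zero_mul]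
        · have : coeff N (f ^ i) = 0 := by
            apply hpowf
            have h1 : r * 2 ≤ i * n := Nat.mul_le_mul hir hn2
            omega
          rw [this, mul_zero]
    · intro h
      exact absurd (Finset.mem_range.mpr (by omega)) h
  -- coefficient of w^m at N
  have hW : ∀ m, 2 ≤ m → m ≤ N → coeff N (w ^ m) =
      (if m = N then 1 else 0) + (m : k) * coeff (N - m + 1) δ := by
    intro m hm2 hmN
    have hw' : w = δ + X := by rw [hδ]; ring
    rw [hw', add_pow, map_sum]
    have key : ∀ i ∈ Finset.range (m + 1),
        coeff N (δ ^ i * X ^ (m - i) * ((m.choose i : ℕ) : PowerSeries k)) =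
        if i = 0 then (if m = N then (1 : k) else 0)
        else if i = 1 then (m : k) * coeff (N - m + 1) δ else 0 := by
      intro i hi
      rw [Finset.mem_range] at hi
      have hcast : ((m.choose i : ℕ) : PowerSeries k) = C ((m.choose i : ℕ) : k) := by
        simp
      rw [hcast, PowerSeries.coeff_mul_C]
      rcases Nat.lt_or_ge i 2 with hi2 | hi2
      · interval_cases i
        · simp only [pow_zero, one_mul, Nat.choose_zero_right, Nat.cast_one, mul_one,
            coeff_X_pow, Nat.sub_zero]
          split_ifs with h1 h2 h2 <;> first | rfl | omega
        · rw [pow_one, if_neg (by omega), if_pos rfl, Nat.choose_one_right]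
          rw [coeff_mul_X_pow', if_pos (by omega)]
          have : N - (m - 1) = N - m + 1 := by omega
          rw [this]; ring
      · rw [if_neg (by omega), if_neg (by omega)]
        rw [coeff_mul_X_pow', if_pos (by omega)]
        have hz : coeff (N - (m - i)) (δ ^ i) = 0 := by
          apply hpowδ
          have h1 : 2 * (r - 1) ≤ i * (r - 1) := Nat.mul_le_mul_right _ hi2
          have h2 : i * (r - 1) + i = i * r := by
            rw [← Nat.mul_succ]
            congr 1
            omega
          omega
        rw [hz, zero_mul]
    rw [Finset.sum_congr rfl key]
    obtain ⟨m', rfl⟩ : ∃ m', m = m' + 2 := ⟨m - 2, by omega⟩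
    rw [Finset.sum_range_succ', Finset.sum_range_succ']
    simp only [if_neg (Nat.succ_ne_zero _), Nat.add_eq_zero]
    norm_num
    push_cast
    ring
  -- Step B
  have hB : coeff N (f.comp' w) = coeff N f +
      coeff k0 f.derivativeFun * coeff r w := by
    rw [PowerSeries.comp', coeff_mk]
    have key : ∀ m ∈ Finset.range (N + 1), coeff m f * coeff N (w ^ m) =
        (if m = N then coeff N f else 0) +
        (if m = k0 + 1 then coeff k0 f.derivativeFun * coeff r w else 0) := by
      intro m hm
      rw [Finset.mem_range] at hm
      by_cases hmn : m < n
      · rw [hflow m hmn, zero_mul, if_neg (by omega), if_neg (by omega)]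
        ring
      · push_neg at hmn
        rw [hW m (by omega) (by omega), mul_add]
        congr 1
        · split_ifs with h
          · subst h; ring
          · ring
        · have hmul : coeff m f * ((m : k) * coeff (N - m + 1) δ) =
              coeff (m - 1) f.derivativeFun * coeff (N - m + 1) δ := by
            have h1 : m - 1 + 1 = m := by omega
            have h2 : ((m : ℕ) : k) = ((m - 1 : ℕ) : k) + 1 := by
              rw [← Nat.cast_succ]
              exact congrArg Nat.cast (by omega)
            rw [show f.derivativeFun = derivative k f from rfl, coeff_derivative, h1, h2]
            ring
          rw [hmul]
          by_cases hmk : m = k0 + 1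
          · subst hmk
            rw [if_pos rfl]
            have h1 : k0 + 1 - 1 = k0 := by omega
            have h2 : N - (k0 + 1) + 1 = r := by omega
            rw [h1, h2, hδ, map_sub, coeff_X, if_neg (by omega)]
            ring
          · rw [if_neg hmk]
            rcases Nat.lt_or_ge (m - 1) k0 with hlt | hge
            · rw [hglow _ hlt, zero_mul]
            · have : coeff (N - m + 1) δ = 0 := by
                apply hδc
                omega
              rw [this, mul_zero]
    rw [Finset.sum_congr rfl key, Finset.sum_add_distrib,
      Finset.sum_ite_eq' _ N, Finset.sum_ite_eq' _ (k0 + 1),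
      if_pos (Finset.mem_range.mpr (by omega)),
      if_pos (Finset.mem_range.mpr (by omega))]
  have heq := congrArg (coeff N) hcomm
  rw [hA, hB, left_eq_add] at heq
  rcases mul_eq_zero.mp heq with h | h
  · exact hgk h
  · exact hwr h
end
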